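/- For n ≥ 2, the eigenvalue property λ : Dens(n) → ℝⁿ (assigning to each density matrix its vector of eigenvalues in non-increasing order) is not elicitable: there is no quantum score with report set ℝⁿ such that for every ρ ∈ Dens(n), {λ(ρ)} = argmax_{r∈ℝⁿ} S(r; ρ). -/

import Mathlib

open Matrix BigOperators ComplexOrder

noncomputable section

/-- The space of `n × n` complex matrices. -/
abbrev Mat (n : ℕ) := Matrix (Fin n) (Fin n) ℂ

/-- The set of density matrices on ℂⁿ: positive semidefinite with trace 1. -/
def Dens (n : ℕ) : Set (Mat n) := {ρ | ρ.PosSemidef ∧ ρ.trace = 1}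

/-- Real inner product on (Hermitian) matrices: ⟨A,B⟩ = Tr(AB) (real part). -/
def hip {n : ℕ} (A B : Mat n) : ℝ := ((A * B).trace).re

/-- A POVM with finite outcome set `Y`. -/
def IsPOVM {n : ℕ} {Y : Type*} [Fintype Y] (μ : Y → Mat n) : Prop :=
  (∀ y, (μ y).PosSemidef) ∧ ∑ y, μ y = 1

/-- A projection-valued measurement. -/
def IsPVM {n : ℕ} {Y : Type*} [Fintype Y] (μ : Y → Mat n) : Prop :=
  IsPOVM μ ∧ (∀ y, (μ y).IsHermitian ∧ μ y * μ y = μ y) ∧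
    ∀ y y', y ≠ y' → μ y * μ y' = 0

/-- Expected score of a quantum score with report type `R`. -/
def expScoreR {n : ℕ} {R : Type*} {Y : Type*} [Fintype Y]
    (s : R → Y → ℝ) (μ : R → Y → Mat n) (r : R) (ρ : Mat n) : ℝ :=
  ∑ y, hip (μ r y) ρ * s r y

/-- Truthfulness of a quantum score. -/
def Truthful {n : ℕ} {Y : Type*} [Fintype Y]
    (s : Mat n → Y → ℝ) (μ : Mat n → Y → Mat n) : Prop :=
  ∀ ρ ∈ Dens n, ∀ ρ' ∈ Dens n, expScoreR s μ ρ' ρ ≤ expScoreR s μ ρ ρ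

/-- Strict truthfulness of a quantum score. -/
def StrictlyTruthful {n : ℕ} {Y : Type*} [Fintype Y]
    (s : Mat n → Y → ℝ) (μ : Mat n → Y → Mat n) : Prop :=
  Truthful s μ ∧ ∀ ρ ∈ Dens n, ∀ ρ' ∈ Dens n,
    expScoreR s μ ρ' ρ = expScoreR s μ ρ ρ → ρ' = ρ

/-- `d` is a (Hermitian-matrix) subgradient of `F` at `ρ` relative to `Dens n`. -/
def IsQSubgrad {n : ℕ} (F : Mat n → ℝ) (ρ d : Mat n) : Prop :=
  ∀ τ ∈ Dens n, F ρ + hip d (τ - ρ) ≤ F τ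

/-- `d` is a subgradient of `f` at `p` relative to `P ⊆ ℝ^Y`. -/
def IsCSubgrad {Y : Type*} [Fintype Y] (P : Set (Y → ℝ)) (f : (Y → ℝ) → ℝ)
    (p d : Y → ℝ) : Prop :=
  ∀ q ∈ P, f p + ∑ y, d y * (q y - p y) ≤ f q

/-- A POVM is tomographically complete if the real span of its elements is
the set of Hermitian matrices. -/
def TomoComplete {n : ℕ} {Y : Type*} [Fintype Y] (μ : Y → Mat n) : Prop :=
  ∀ X : Mat n, X.IsHermitian ↔ X ∈ Submodule.span ℝ (Set.range μ)

/-- The eigenvalues of a Hermitian matrix, in non-increasing order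
(junk value `0` on non-Hermitian matrices). -/
def eigs {n : ℕ} (ρ : Mat n) : Fin n → ℝ :=
  if h : ρ.IsHermitian then
    fun i => (h.eigenvalues ∘ (Tuple.sort h.eigenvalues)) i.rev
  else 0

/-- The outer product `v v*`. -/
def outer {n : ℕ} (v : Fin n → ℂ) : Mat n := Matrix.vecMulVec v (star v)

/-- A family of orthonormal vectors in ℂⁿ. -/
def ONFam {n k : ℕ} (x : Fin k → Fin n → ℂ) : Prop :=
  ∀ i j, ∑ m, (starRingEnd ℂ) (x i m) * x j m = if i = j then 1 else 0

/-- `x` is a spectral decomposition of `ρ` (with eigenvalues in non-increasing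
order `eigs ρ`). -/
def IsSpecDecomp {n : ℕ} (ρ : Mat n) (x : Fin n → Fin n → ℂ) : Prop :=
  ONFam x ∧ ρ = ∑ y, (eigs ρ y : ℂ) • outer (x y)

/-- Expected classical score `ŝ(q; p)`. -/
def cExp {n : ℕ} (s : (Fin n → ℝ) → Fin n → ℝ) (q p : Fin n → ℝ) : ℝ :=
  ∑ y, p y * s q y

/-- Properness of a classical scoring rule. -/
def Proper {n : ℕ} (s : (Fin n → ℝ) → Fin n → ℝ) : Prop :=
  ∀ p ∈ stdSimplex ℝ (Fin n), ∀ q ∈ stdSimplex ℝ (Fin n), cExp s q p ≤ cExp s p p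

/-- Strict properness of a classical scoring rule. -/
def StrictlyProper {n : ℕ} (s : (Fin n → ℝ) → Fin n → ℝ) : Prop :=
  Proper s ∧ ∀ p ∈ stdSimplex ℝ (Fin n), ∀ q ∈ stdSimplex ℝ (Fin n),
    cExp s q p = cExp s p p → q = p

/-- Permutation invariance of a classical scoring rule: `ŝ(p, y) = ŝ(πp, π y)`
where `(πp)_y = p_{π y}`. -/
def PermInv {n : ℕ} (s : (Fin n → ℝ) → Fin n → ℝ) : Prop :=
  ∀ (π : Equiv.Perm (Fin n)) (p : Fin n → ℝ) (y : Fin n), s p y = s (p ∘ π) (π y)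

/-- Expected spectral score `S[ŝ](ρ'; ρ)` computed using the spectral
decomposition `x` of the report `ρ'`. -/
def specExp {n : ℕ} (s : (Fin n → ℝ) → Fin n → ℝ) (x : Fin n → Fin n → ℂ)
    (ρ' ρ : Mat n) : ℝ :=
  ∑ y, hip (outer (x y)) ρ * s (eigs ρ') y

/-- Truthfulness of the spectral score `S[ŝ]`. -/
def SpecTruthful {n : ℕ} (s : (Fin n → ℝ) → Fin n → ℝ) : Prop :=
  ∀ ρ ∈ Dens n, ∀ ρ' ∈ Dens n, ∀ x z, IsSpecDecomp ρ' x → IsSpecDecomp ρ z →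
    specExp s x ρ' ρ ≤ specExp s z ρ ρ

/-- Strict truthfulness of the spectral score `S[ŝ]`. -/
def SpecStrictlyTruthful {n : ℕ} (s : (Fin n → ℝ) → Fin n → ℝ) : Prop :=
  SpecTruthful s ∧ ∀ ρ ∈ Dens n, ∀ ρ' ∈ Dens n, ∀ x z,
    IsSpecDecomp ρ' x → IsSpecDecomp ρ z →
    specExp s x ρ' ρ = specExp s z ρ ρ → ρ' = ρ

/-- Elicitability of a property of density matrices by a quantum score. -/
def ElicitableProp {n : ℕ} {R : Type*} (Γ : Mat n → R) : Prop :=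
  ∃ (m : ℕ) (s : R → Fin m → ℝ) (μ : R → Fin m → Mat n),
    (∀ r, IsPOVM (μ r)) ∧
    ∀ ρ ∈ Dens n, ∀ r, (∀ r', expScoreR s μ r' ρ ≤ expScoreR s μ r ρ) ↔ r = Γ ρ

/-- Identifiability of an ℝᵏ-valued property of density matrices. -/
def IdentifiableProp {n k : ℕ} (Γ : Mat n → (Fin k → ℝ)) : Prop :=
  ∃ V : (Fin k → ℝ) → Fin k → Mat n,
    ∀ r ∈ Γ '' (Dens n), (∀ i, (V r i).IsHermitian) ∧
      ∀ ρ ∈ Dens n, (Γ ρ = r ↔ ∀ i, hip (V r i) ρ = 0)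

/-- `Γ` is `k`-elicitable. -/
def KElicitable {n : ℕ} {R : Type*} (k : ℕ) (Γ : Mat n → R) : Prop :=
  ∃ (Γh : Mat n → (Fin k → ℝ)) (ψ : (Fin k → ℝ) → R),
    ElicitableProp Γh ∧ IdentifiableProp Γh ∧ ∀ ρ ∈ Dens n, Γ ρ = ψ (Γh ρ)

end


namespace NotElicAux

open Polynomial Finset Matrix

variable {n : ℕ}

lemma map_mul_C (X Y : Mat n) :
    (X * Y).map (C : ℂ →+* ℂ[X]) = X.map C * Y.map C :=
  Matrix.map_mul

lemma charpoly_conj (P A : Mat n) (h : P * star P = 1) :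
    (P * A * star P).charpoly = A.charpoly := by
  have hcomm : ∀ M : Matrix (Fin n) (Fin n) ℂ[X],
      M * Matrix.scalar (Fin n) (X : ℂ[X]) = Matrix.scalar (Fin n) (X : ℂ[X]) * M := by
    intro M
    exact (Matrix.scalar_commute (X : ℂ[X]) (fun r' => Commute.all _ _) M).eq.symm
  have h1 : P.map (C : ℂ →+* ℂ[X]) * (star P).map C = 1 := by
    rw [← map_mul_C, h, Matrix.map_one _ (map_zero _) (map_one _)]
  have key : Matrix.charmatrix (P * A * star P)
      = P.map (C : ℂ →+* ℂ[X]) * Matrix.charmatrix A * (star P).map C := by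
    have hmid : P.map (C : ℂ →+* ℂ[X]) * Matrix.scalar (Fin n) (X : ℂ[X]) * (star P).map C
        = Matrix.scalar (Fin n) (X : ℂ[X]) := by
      rw [hcomm (P.map (C : ℂ →+* ℂ[X])), mul_assoc, h1, mul_one]
    simp only [Matrix.charmatrix, RingHom.mapMatrix_apply]
    rw [map_mul_C, map_mul_C, mul_sub, sub_mul, hmid]
  have hdet1 : (P.map (C : ℂ →+* ℂ[X])).det * ((star P).map C).det = 1 := by
    rw [← Matrix.det_mul, ← map_mul_C, h, Matrix.map_one _ (map_zero _) (map_one _),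
      Matrix.det_one]
  rw [Matrix.charpoly, Matrix.charpoly, key, Matrix.det_mul, Matrix.det_mul]
  calc (P.map (C : ℂ →+* ℂ[X])).det * (Matrix.charmatrix A).det * ((star P).map C).det
      = (Matrix.charmatrix A).det * ((P.map (C : ℂ →+* ℂ[X])).det * ((star P).map C).det) := by
        ring
    _ = (Matrix.charmatrix A).det := by rw [hdet1, mul_one]

lemma charpoly_herm (ρ : Mat n) (hρ : ρ.IsHermitian) :
    ρ.charpoly = ∏ i, (X - C ((hρ.eigenvalues i : ℝ) : ℂ)) := by
  have hs := hρ.spectral_theorem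
  have hu : (hρ.eigenvectorUnitary : Mat n) * star (hρ.eigenvectorUnitary : Mat n) = 1 := by
    exact Matrix.mem_unitaryGroup_iff.mp hρ.eigenvectorUnitary.2
  calc ρ.charpoly
      = ((hρ.eigenvectorUnitary : Mat n) *
          Matrix.diagonal (RCLike.ofReal ∘ hρ.eigenvalues) *
          star (hρ.eigenvectorUnitary : Mat n)).charpoly := congrArg Matrix.charpoly hs
    _ = (Matrix.diagonal (RCLike.ofReal ∘ hρ.eigenvalues) : Mat n).charpoly :=
        charpoly_conj _ _ hu
    _ = ∏ i, (X - C ((hρ.eigenvalues i : ℝ) : ℂ)) := by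
        rw [Matrix.charpoly_of_upperTriangular _ (Matrix.blockTriangular_diagonal _)]
        refine Finset.prod_congr rfl fun i _ => ?_
        rw [Matrix.diagonal_apply_eq]
        rfl

/-- charpoly expressed via `eigs`. -/
lemma charpoly_eigs (ρ : Mat n) (hρ : ρ.IsHermitian) :
    ρ.charpoly = ∏ i, (X - C ((eigs ρ i : ℝ) : ℂ)) := by
  rw [charpoly_herm ρ hρ]
  have he : ∀ i, eigs ρ i = hρ.eigenvalues
      ((Fin.revPerm.trans (Tuple.sort hρ.eigenvalues)) i) := by
    intro i
    simp only [eigs, dif_pos hρ]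
    rfl
  rw [show (∏ i, (X - C ((eigs ρ i : ℝ) : ℂ)))
      = ∏ i, (X - C ((hρ.eigenvalues ((Fin.revPerm.trans (Tuple.sort hρ.eigenvalues)) i) : ℝ) : ℂ))
    from Finset.prod_congr rfl fun i _ => by rw [he]]
  exact (Equiv.prod_comp (Fin.revPerm.trans (Tuple.sort hρ.eigenvalues))
    (fun j => X - C ((hρ.eigenvalues j : ℝ) : ℂ))).symm

lemma perm_multiset_map (σ : Equiv.Perm (Fin n)) (f : Fin n → ℝ) :
    (Finset.univ.val).map (fun i => f (σ i)) = (Finset.univ.val).map f := by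
  conv_rhs => rw [← Multiset.map_univ_val_equiv σ]
  rw [Multiset.map_map]
  rfl

lemma monotone_unique {f g : Fin n → ℝ} (hf : Monotone f) (hg : Monotone g)
    (h : (Finset.univ.val).map f = (Finset.univ.val).map g) : f = g := by
  have hl : List.ofFn f = List.ofFn g := by
    refine List.Perm.eq_of_sortedLE hf.sortedLE_ofFn hg.sortedLE_ofFn ?_
    rw [← Multiset.coe_eq_coe]
    rw [show ((List.ofFn f : List ℝ) : Multiset ℝ) = (Finset.univ.val).map f from
      (Fin.univ_val_map f).symm ▸ rfl]
    rw [show ((List.ofFn g : List ℝ) : Multiset ℝ) = (Finset.univ.val).map g from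
      (Fin.univ_val_map g).symm ▸ rfl]
    exact h
  exact List.ofFn_injective hl

lemma eigs_multiset (ρ : Mat n) (hρ : ρ.IsHermitian) :
    (Finset.univ.val).map (eigs ρ) = (Finset.univ.val).map hρ.eigenvalues := by
  have he : eigs ρ = fun i => hρ.eigenvalues
      ((Fin.revPerm.trans (Tuple.sort hρ.eigenvalues)) i) := by
    funext i
    simp only [eigs, dif_pos hρ]
    rfl
  rw [he]
  exact perm_multiset_map _ _

lemma eigs_antitone_comp (ρ : Mat n) (hρ : ρ.IsHermitian) :
    Monotone (fun i => eigs ρ (Fin.rev i)) := by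
  have : (fun i => eigs ρ (Fin.rev i))
      = hρ.eigenvalues ∘ (Tuple.sort hρ.eigenvalues) := by
    funext i
    simp only [eigs, dif_pos hρ, Function.comp_apply, Fin.rev_rev]
  rw [this]
  exact Tuple.monotone_sort _

lemma eigs_eq_of_charpoly_eq {ρ1 ρ2 : Mat n} (h1 : ρ1.IsHermitian) (h2 : ρ2.IsHermitian)
    (h : ρ1.charpoly = ρ2.charpoly) : eigs ρ1 = eigs ρ2 := by
  have hm : (Finset.univ.val).map (eigs ρ1) = (Finset.univ.val).map (eigs ρ2) := by
    have hc1 := charpoly_eigs ρ1 h1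
    have hc2 := charpoly_eigs ρ2 h2
    have hroots : ((Finset.univ.val).map (fun i => ((eigs ρ1 i : ℝ) : ℂ)))
        = ((Finset.univ.val).map (fun i => ((eigs ρ2 i : ℝ) : ℂ))) := by
      have rp : ∀ f : Fin n → ℝ, (∏ i, (X - C ((f i : ℝ) : ℂ))).roots
          = (Finset.univ.val).map (fun i => ((f i : ℝ) : ℂ)) := by
        intro f
        have h0 := Polynomial.roots_multiset_prod_X_sub_C
          ((Finset.univ.val).map (fun i => ((f i : ℝ) : ℂ)))
        rw [Multiset.map_map] at h0
        rw [Finset.prod_eq_multiset_prod]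
        exact h0
      have r1 := rp (eigs ρ1)
      have r2 := rp (eigs ρ2)
      rw [← r1, ← r2, ← hc1, ← hc2, h]
    have : ((Finset.univ.val).map (eigs ρ1)).map (fun x : ℝ => (x : ℂ))
        = ((Finset.univ.val).map (eigs ρ2)).map (fun x : ℝ => (x : ℂ)) := by
      rw [Multiset.map_map, Multiset.map_map]
      exact hroots
    exact Multiset.map_injective Complex.ofReal_injective this
  have hrev : (fun i => eigs ρ1 (Fin.rev i)) = (fun i => eigs ρ2 (Fin.rev i)) := by
    refine monotone_unique (eigs_antitone_comp ρ1 h1) (eigs_antitone_comp ρ2 h2) ?_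
    have p1 := perm_multiset_map Fin.revPerm (eigs ρ1)
    have p2 := perm_multiset_map Fin.revPerm (eigs ρ2)
    simp only [Fin.revPerm_apply] at p1 p2
    rw [p1, p2]
    exact hm
  funext i
  have := congrFun hrev (Fin.rev i)
  simpa [Fin.rev_rev] using this

lemma hip_half (A x y : Mat n) :
    hip A ((2⁻¹ : ℂ) • x + (2⁻¹ : ℂ) • y) = 2⁻¹ * hip A x + 2⁻¹ * hip A y := by
  simp only [hip, mul_add, mul_smul_comm, Matrix.trace_add, Matrix.trace_smul, smul_eq_mul,
    Complex.add_re, Complex.mul_re]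
  norm_num

lemma expScoreR_half {m : ℕ} (s : (Fin n → ℝ) → Fin m → ℝ)
    (μ : (Fin n → ℝ) → Fin m → Mat n) (r : Fin n → ℝ) (x y : Mat n) :
    expScoreR s μ r ((2⁻¹ : ℂ) • x + (2⁻¹ : ℂ) • y)
      = 2⁻¹ * expScoreR s μ r x + 2⁻¹ * expScoreR s μ r y := by
  simp only [expScoreR, hip_half, Finset.mul_sum, ← Finset.sum_add_distrib]
  refine Finset.sum_congr rfl fun i _ => by ring

end NotElicAux

/-- for n ≥ 2, the sorted eigenvalue vector of a density matrix
is not elicitable. -/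
theorem eigenvalues_not_elicitable {n : ℕ} (hn : 2 ≤ n) :
    ¬ ∃ (m : ℕ) (s : (Fin n → ℝ) → Fin m → ℝ)
        (μ : (Fin n → ℝ) → Fin m → Mat n),
      (∀ r, IsPOVM (μ r)) ∧
      ∀ ρ ∈ Dens n, ∀ r : Fin n → ℝ,
        (∀ r', expScoreR s μ r' ρ ≤ expScoreR s μ r ρ) ↔ r = eigs ρ := by
  classical
  rintro ⟨m, s, μ, hPOVM, hiff⟩
  set i0 : Fin n := ⟨0, by omega⟩ with hi0
  set i1 : Fin n := ⟨1, by omega⟩ with hi1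
  have h01 : i0 ≠ i1 := by simp [hi0, hi1, Fin.ext_iff]
  set d1 : Fin n → ℂ := fun j => if j = i0 then 1 else 0 with hd1
  set d2 : Fin n → ℂ := fun j => if j = i1 then 1 else 0 with hd2
  set ρ1 : Mat n := Matrix.diagonal d1 with hρ1
  set ρ2 : Mat n := Matrix.diagonal d2 with hρ2
  set ρ : Mat n := (2⁻¹ : ℂ) • ρ1 + (2⁻¹ : ℂ) • ρ2 with hρ
  have hρdiag : ρ = Matrix.diagonal (fun j => 2⁻¹ * d1 j + 2⁻¹ * d2 j) := by
    rw [hρ, hρ1, hρ2]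
    ext i j
    rcases eq_or_ne i j with rfl | hij
    · simp [Matrix.diagonal]
    · simp [Matrix.diagonal_apply_ne _ hij, hij]
  -- density matrix facts
  have hD1 : ρ1 ∈ Dens n := by
    refine ⟨Matrix.posSemidef_diagonal_iff.mpr fun i => ?_, ?_⟩
    · rw [hd1]
      dsimp only
      split_ifs
      · exact zero_le_one
      · exact le_refl _
    · rw [hρ1, Matrix.trace_diagonal, hd1]
      simp [Finset.sum_ite_eq']
  have hD2 : ρ2 ∈ Dens n := by
    refine ⟨Matrix.posSemidef_diagonal_iff.mpr fun i => ?_, ?_⟩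
    · rw [hd2]
      dsimp only
      split_ifs
      · exact zero_le_one
      · exact le_refl _
    · rw [hρ2, Matrix.trace_diagonal, hd2]
      simp [Finset.sum_ite_eq']
  have hD : ρ ∈ Dens n := by
    constructor
    · rw [hρdiag]
      refine Matrix.posSemidef_diagonal_iff.mpr fun i => ?_
      rw [hd1, hd2]
      dsimp only
      split_ifs <;> rw [Complex.le_def] <;> norm_num
    · rw [hρ, Matrix.trace_add, Matrix.trace_smul, Matrix.trace_smul, hD1.2, hD2.2]
      norm_num
  have hH1 : ρ1.IsHermitian := hD1.1.isHermitian
  have hH2 : ρ2.IsHermitian := hD2.1.isHermitian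
  have hH : ρ.IsHermitian := hD.1.isHermitian
  -- charpoly of diagonal matrices
  have hcp : ∀ d : Fin n → ℂ, (Matrix.diagonal d).charpoly
      = ∏ i, (Polynomial.X - Polynomial.C (d i)) := by
    intro d
    rw [Matrix.charpoly_of_upperTriangular _ (Matrix.blockTriangular_diagonal d)]
    exact Finset.prod_congr rfl fun i _ => by rw [Matrix.diagonal_apply_eq]
  -- ρ1 and ρ2 have the same sorted eigenvalues
  have heq12 : eigs ρ1 = eigs ρ2 := by
    refine NotElicAux.eigs_eq_of_charpoly_eq hH1 hH2 ?_
    rw [hρ1, hρ2, hcp, hcp]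
    have hd : ∀ i, d1 i = d2 (Equiv.swap i0 i1 i) := by
      intro i
      rcases eq_or_ne i i0 with rfl | h0
      · rw [hd1, hd2]
        simp [Equiv.swap_apply_left]
      · rcases eq_or_ne i i1 with rfl | h1
        · rw [hd1, hd2]
          simp [Equiv.swap_apply_right, h01, Ne.symm h01]
        · rw [hd1, hd2]
          simp [Equiv.swap_apply_of_ne_of_ne h0 h1, h0, h1]
    calc ∏ i, (Polynomial.X - Polynomial.C (d1 i))
        = ∏ i, (Polynomial.X - Polynomial.C (d2 (Equiv.swap i0 i1 i))) :=
          Finset.prod_congr rfl fun i _ => by rw [← hd]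
      _ = ∏ i, (Polynomial.X - Polynomial.C (d2 i)) :=
          Equiv.prod_comp (Equiv.swap i0 i1) (fun j => Polynomial.X - Polynomial.C (d2 j))
  -- but ρ has different sorted eigenvalues
  have hne : eigs ρ1 ≠ eigs ρ := by
    intro heq
    have hcc : ρ1.charpoly = ρ.charpoly := by
      rw [NotElicAux.charpoly_eigs ρ1 hH1, NotElicAux.charpoly_eigs ρ hH, heq]
    have e1 : Polynomial.eval (1 : ℂ) ρ1.charpoly = 0 := by
      rw [hρ1, hcp, Polynomial.eval_prod]
      refine Finset.prod_eq_zero (Finset.mem_univ i0) ?_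
      rw [hd1]
      simp
    have e2 : Polynomial.eval (1 : ℂ) ρ.charpoly ≠ 0 := by
      rw [hρdiag, hcp, Polynomial.eval_prod]
      rw [Finset.prod_ne_zero_iff]
      intro i _
      simp only [Polynomial.eval_sub, Polynomial.eval_X, Polynomial.eval_C]
      rcases eq_or_ne i i0 with rfl | h0
      · rw [hd1, hd2]
        simp only [if_pos rfl, if_neg h01]
        norm_num
      · rcases eq_or_ne i i1 with rfl | h1
        · rw [hd1, hd2]
          simp only [if_pos rfl, if_neg h0]
          norm_num
        · rw [hd1, hd2]
          simp only [if_neg h0, if_neg h1]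
          norm_num
    rw [hcc] at e1
    exact e2 e1
  -- the score argument
  have hmax1 : ∀ r', expScoreR s μ r' ρ1 ≤ expScoreR s μ (eigs ρ1) ρ1 :=
    (hiff ρ1 hD1 (eigs ρ1)).mpr rfl
  have hmax2 : ∀ r', expScoreR s μ r' ρ2 ≤ expScoreR s μ (eigs ρ1) ρ2 :=
    (hiff ρ2 hD2 (eigs ρ1)).mpr heq12
  have hnot : ¬ ∀ r', expScoreR s μ r' ρ ≤ expScoreR s μ (eigs ρ1) ρ := fun hmax =>
    hne ((hiff ρ hD (eigs ρ1)).mp hmax)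
  push_neg at hnot
  obtain ⟨r'', hr''⟩ := hnot
  have hkey : expScoreR s μ r'' ρ ≤ expScoreR s μ (eigs ρ1) ρ := by
    rw [hρ, NotElicAux.expScoreR_half, NotElicAux.expScoreR_half]
    have h1 := hmax1 r''
    have h2 := hmax2 r''
    nlinarith
  exact absurd hkey (not_le.mpr hr'')
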